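/- Let H₀ > 0 and α ∈ ℝ, let I be an open interval of t on which θ(t) := (√15/6)(H₀ t + α) ∈ (−π/2, π/2), and let ψ(t) = 3H₀ (1 + (1/√15) tan θ(t)). Define ρ(t) by 8π ρ(t) = (3/20) H₀² (8 − 3 / cos² θ(t)). Then the first generalized Friedmann equation with constant Hubble function H = H₀ holds on I: 3H₀² = 8π ρ(t) + (9/8) ψ̇(t) + (9/8) H₀ ψ(t) − (3/16) ψ(t)² for every t ∈ I. -/

import Mathlib

open Real

/-- With `θ(t) = (√15/6)(H₀ t + α)`,
`ψ(t) = 3H₀(1 + (1/√15) tan θ(t))` and `8π ρ(t) = (3/20) H₀² (8 − 3/cos² θ(t))`,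
the first generalized Friedmann equation with constant Hubble function `H = H₀` holds:
`3H₀² = 8π ρ + (9/8)ψ̇ + (9/8)H₀ψ − (3/16)ψ²` on any open interval where
`θ(t) ∈ (−π/2, π/2)`. -/
theorem deSitter_first_friedmann
    (H₀ α : ℝ) (hH₀ : 0 < H₀)
    (I : Set ℝ) (hI : IsOpen I)
    (θ : ℝ → ℝ) (hθ : θ = fun t => (Real.sqrt 15 / 6) * (H₀ * t + α))
    (hrange : ∀ t ∈ I, θ t ∈ Set.Ioo (-(π/2)) (π/2))
    (ψ : ℝ → ℝ)
    (hψ : ψ = fun t => 3 * H₀ * (1 + (1 / Real.sqrt 15) * Real.tan (θ t)))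
    (ρ : ℝ → ℝ)
    (hρ : ∀ t, 8 * π * ρ t = (3/20) * H₀ ^ 2 * (8 - 3 / (Real.cos (θ t)) ^ 2)) :
    ∀ t ∈ I,
      3 * H₀ ^ 2
        = 8 * π * ρ t + (9/8) * deriv ψ t + (9/8) * H₀ * ψ t - (3/16) * (ψ t) ^ 2 := by
  intro t ht
  have hmem := hrange t ht
  have hcpos : 0 < Real.cos (θ t) :=
    Real.cos_pos_of_mem_Ioo (by simpa using hmem)
  have hc : Real.cos (θ t) ≠ 0 := ne_of_gt hcpos
  have hs15 : Real.sqrt 15 ^ 2 = 15 := Real.sq_sqrt (by norm_num)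
  have hs15ne : Real.sqrt 15 ≠ 0 := by
    intro h; rw [h] at hs15; norm_num at hs15
  -- derivative of θ
  have hθd : HasDerivAt θ (Real.sqrt 15 / 6 * H₀) t := by
    subst hθ
    simpa using (((hasDerivAt_id t).const_mul H₀).add_const α).const_mul
      (Real.sqrt 15 / 6)
  -- derivative of tan ∘ θ
  have htand : HasDerivAt (fun s => Real.tan (θ s))
      (1 / Real.cos (θ t) ^ 2 * (Real.sqrt 15 / 6 * H₀)) t :=
    (Real.hasDerivAt_tan hc).comp t hθd
  have hψd : HasDerivAt ψ
      (3 * H₀ * ((1 / Real.sqrt 15) * (1 / Real.cos (θ t) ^ 2 *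
        (Real.sqrt 15 / 6 * H₀)))) t := by
    subst hψ
    simpa using ((htand.const_mul (1 / Real.sqrt 15)).const_add 1).const_mul (3 * H₀)
  have hinv : 1 / Real.cos (θ t) ^ 2 = 1 + Real.tan (θ t) ^ 2 := by
    rw [one_div, ← Real.inv_one_add_tan_sq hc, inv_inv]
  have hinv3 : 3 / Real.cos (θ t) ^ 2 = 3 * (1 + Real.tan (θ t) ^ 2) := by
    rw [div_eq_mul_one_div, hinv]
  rw [hψd.deriv, hρ t, hψ]
  simp only
  rw [hinv, hinv3]
  field_simp
  linear_combination (-576 * Real.tan (θ t) ^ 2) * hs15
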